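/- Let d be a positive even integer, H_k = F_{2+d(k-1)}, A = K_d - 1, B = F_{2+d} - 1. For every n ≥ 3, H_{n+1} = (B-1)·H_1 + Σ_{k=2}^{n-1} (A-1)·H_k + A·H_n + 1. -/

import Mathlib

/-- Lucas sequence: K 1 = 1, K 2 = 3, K (k+2) = K (k+1) + K k. -/
def lucas : ℕ → ℕ
  | 0 => 2
  | 1 => 1
  | n + 2 => lucas (n + 1) + lucas n

/-- The Chung–Graham rule of expansion for even interval `d`,
with `A = lucas d - 1` and `B = Nat.fib (2 + d) - 1`.
Sequences are indexed from 1 (so `ε 0 = 0`) and finitely supported. -/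
def CGRule (d : ℕ) (ε : ℕ → ℕ) : Prop :=
  ε 0 = 0 ∧
  {k | ε k ≠ 0}.Finite ∧
  ε 1 ≤ Nat.fib (2 + d) - 1 ∧
  (∀ k, 2 ≤ k → ε k ≤ lucas d - 1) ∧
  (∀ m, 2 ≤ m → ε m = lucas d - 1 →
    (∀ k, 2 ≤ k → k ≤ m - 1 → ε k = lucas d - 1 - 1) →
    ε 1 < Nat.fib (2 + d) - 1) ∧
  (∀ k j, 2 ≤ k → k < j → ε k = lucas d - 1 → ε j = lucas d - 1 →
    ∃ c, k < c ∧ c < j ∧ ε c ≤ lucas d - 1 - 2)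

/-- Lexicographic-from-the-right strict order on coefficient sequences. -/
def CGlt (ε τ : ℕ → ℕ) : Prop :=
  ∃ ℓ, ε ℓ < τ ℓ ∧ ∀ k, ℓ < k → ε k = τ k


lemma fib_rec (a b c : ℕ) (h1 : b = a + 1) (h2 : c = a + 2) :
    Nat.fib c = Nat.fib b + Nat.fib a := by
  subst h1; subst h2; rw [Nat.fib_add_two]; omega

lemma lucas_eq : ∀ n, lucas (n+1) = Nat.fib n + Nat.fib (n+2) := by
  have H : ∀ n, lucas (n+1) = Nat.fib n + Nat.fib (n+2) ∧
      lucas (n+2) = Nat.fib (n+1) + Nat.fib (n+3) := by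
    intro n
    induction n with
    | zero => refine ⟨?_, ?_⟩ <;> decide
    | succ k ih =>
      obtain ⟨i1, i2⟩ := ih
      refine ⟨i2, ?_⟩
      show lucas (k+2) + lucas (k+1) = Nat.fib (k+1+1) + Nat.fib (k+1+3)
      have r1 : Nat.fib (k+1+1) = Nat.fib (k+1) + Nat.fib k := fib_rec _ _ _ (by ring) (by ring)
      have r2 : Nat.fib (k+1+3) = Nat.fib (k+3) + Nat.fib (k+2) := fib_rec _ _ _ (by ring) (by ring)
      omega
  exact fun n => (H n).1

lemma cat : ∀ k, Nat.fib (2*k+1) * Nat.fib (2*k+3) = Nat.fib (2*k+2)^2 + 1 := by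
  intro k
  induction k with
  | zero => decide
  | succ j ih =>
    have r1 : Nat.fib (2*j+3) = Nat.fib (2*j+2) + Nat.fib (2*j+1) := fib_rec _ _ _ (by ring) (by ring)
    have r2 : Nat.fib (2*j+4) = Nat.fib (2*j+3) + Nat.fib (2*j+2) := fib_rec _ _ _ (by ring) (by ring)
    have r3 : Nat.fib (2*j+5) = Nat.fib (2*j+4) + Nat.fib (2*j+3) := fib_rec _ _ _ (by ring) (by ring)
    have e1 : 2*(j+1)+1 = 2*j+3 := by ring
    have e2 : 2*(j+1)+3 = 2*j+5 := by ring
    have e3 : 2*(j+1)+2 = 2*j+4 := by ring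
    rw [e1, e2, e3]
    nlinarith [ih, r1, r2, r3]

lemma key (d : ℕ) (hd : 0 < d) (hde : Even d) (m : ℕ) :
    Nat.fib (m + 2*d) + Nat.fib m = lucas d * Nat.fib (m + d) := by
  obtain ⟨k, hk⟩ : ∃ k, d = 2*k+2 := by
    obtain ⟨t, ht⟩ := hde; exact ⟨t - 1, by omega⟩
  subst hk
  have base0 : Nat.fib (0 + 2*(2*k+2)) + Nat.fib 0 = lucas (2*k+2) * Nat.fib (0 + (2*k+2)) := by
    have h : 0 + 2*(2*k+2) = (2*k+1) + (2*k+2) + 1 := by ring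
    rw [h, Nat.fib_add, lucas_eq (2*k+1)]
    rw [show (2*k+1)+1 = 2*k+2 from by omega, show (2*k+2)+1 = 2*k+3 from by omega,
      show (2*k+1)+2 = 2*k+3 from by omega, show 0 + (2*k+2) = 2*k+2 from by omega]
    simp only [Nat.fib_zero, add_zero]
    ring
  have base1 : Nat.fib (1 + 2*(2*k+2)) + Nat.fib 1 = lucas (2*k+2) * Nat.fib (1 + (2*k+2)) := by
    have h : 1 + 2*(2*k+2) = (2*k+2) + (2*k+2) + 1 := by ring
    rw [h, Nat.fib_add, lucas_eq (2*k+1)]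
    rw [show (2*k+1)+2 = 2*k+3 from by omega, show 1 + (2*k+2) = 2*k+3 from by omega,
      show (2*k+2)+1 = 2*k+3 from by omega, Nat.fib_one]
    nlinarith [cat k]
  have step : ∀ m, (Nat.fib (m + 2*(2*k+2)) + Nat.fib m = lucas (2*k+2) * Nat.fib (m + (2*k+2))) ∧
      (Nat.fib (m+1 + 2*(2*k+2)) + Nat.fib (m+1) = lucas (2*k+2) * Nat.fib (m+1 + (2*k+2))) := by
    intro m
    induction m with
    | zero => exact ⟨base0, base1⟩
    | succ j ih =>
      obtain ⟨i1, i2⟩ := ih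
      refine ⟨i2, ?_⟩
      have g1 : Nat.fib (j+1+1 + 2*(2*k+2)) =
          Nat.fib (j+1 + 2*(2*k+2)) + Nat.fib (j + 2*(2*k+2)) := fib_rec _ _ _ (by ring) (by ring)
      have g2 : Nat.fib (j+1+1) = Nat.fib (j+1) + Nat.fib j := fib_rec _ _ _ (by ring) (by ring)
      have g3 : Nat.fib (j+1+1 + (2*k+2)) =
          Nat.fib (j+1 + (2*k+2)) + Nat.fib (j + (2*k+2)) := fib_rec _ _ _ (by ring) (by ring)
      rw [g1, g2, g3, Nat.mul_add (lucas (2*k+2)) (Nat.fib (j+1+(2*k+2))) (Nat.fib (j+(2*k+2)))]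
      rw [← i1, ← i2]; omega
  exact (step m).1

lemma hL3 (d : ℕ) (hd : 0 < d) (hde : Even d) : 3 ≤ lucas d := by
  obtain ⟨k, hk⟩ : ∃ k, d = 2*k+2 := by
    obtain ⟨t, ht⟩ := hde; exact ⟨t - 1, by omega⟩
  subst hk
  rw [show 2*k+2 = (2*k+1)+1 from by ring, lucas_eq]
  have h1 : 1 ≤ Nat.fib (2*k+1) := Nat.fib_pos.2 (by omega)
  have h2 : Nat.fib 3 ≤ Nat.fib (2*k+1+2) := Nat.fib_mono (by omega)
  have h3 : Nat.fib 3 = 2 := by decide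
  omega

lemma hF3 (d : ℕ) (hd : 0 < d) (hde : Even d) : 3 ≤ Nat.fib (2 + d) := by
  obtain ⟨t, ht⟩ := hde
  have h2 : Nat.fib 4 ≤ Nat.fib (2 + d) := Nat.fib_mono (by omega)
  have h3 : Nat.fib 4 = 3 := by decide
  omega

theorem stmt_13 (d : ℕ) (hd : 0 < d) (hde : Even d) (n : ℕ) (hn : 3 ≤ n) :
    Nat.fib (2 + d * n) =
      (Nat.fib (2 + d) - 1 - 1) * Nat.fib 2 +
        (∑ k ∈ Finset.Icc 2 (n - 1), (lucas d - 1 - 1) * Nat.fib (2 + d * (k - 1))) +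
        (lucas d - 1) * Nat.fib (2 + d * (n - 1)) + 1 := by
  have hL := hL3 d hd hde
  have hF := hF3 d hd hde
  have hL1 : 1 ≤ lucas d := by omega
  have hL2 : 1 ≤ lucas d - 1 := by omega
  have hF1 : 1 ≤ Nat.fib (2 + d) := by omega
  have hF2 : 1 ≤ Nat.fib (2 + d) - 1 := by omega
  have hfib2 : Nat.fib 2 = 1 := by decide
  induction n with
  | zero => omega
  | succ m ih =>
    rcases Nat.lt_or_ge m 3 with hm | hm
    · have hm2 : m = 2 := by omega
      subst hm2
      simp only [show (3:ℕ) - 1 = 2 from rfl]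
      rw [Finset.Icc_self, Finset.sum_singleton, hfib2]
      have k1 := key d hd hde (2 + d)
      have k2 := key d hd hde 2
      rw [show 2 + d + 2*d = 2 + d*3 from by ring, show 2 + d + d = 2 + d*2 from by ring] at k1
      rw [show 2 + 2*d = 2 + d*2 from by ring] at k2
      rw [hfib2] at k2
      rw [show (2:ℕ) + 1 = 3 from rfl, show (2:ℕ) - 1 = 1 from rfl, mul_one, mul_one d]
      zify [hL1, hL2, hF1, hF2] at k1 k2 ⊢
      -- goal atoms: fib(2+d*3), fib(2+d), fib(2+d*2), fib(2+d*(2-1))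
      linarith [k1, k2]
    · have ih2 := ih (by omega)
      have hsplit : Finset.Icc 2 (m + 1 - 1) = Finset.Icc 2 (m - 1) ∪ {m} := by
        ext x; simp [Finset.mem_Icc, Finset.mem_union]; omega
      have hdisj : Disjoint (Finset.Icc 2 (m - 1)) ({m} : Finset ℕ) := by
        simp [Finset.disjoint_singleton_right]; omega
      rw [hsplit, Finset.sum_union hdisj, Finset.sum_singleton,
        show m + 1 - 1 = m from rfl, hfib2]
      rw [hfib2] at ih2
      have kk := key d hd hde (2 + d * (m - 1))
      have e5 : 2 + d*(m-1) + 2*d = 2 + d*(m+1) := by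
        rw [show m+1 = (m-1)+2 from by omega]; ring
      have e6 : 2 + d*(m-1) + d = 2 + d*m := by
        nth_rewrite 2 [show m = (m-1)+1 from by omega]; ring
      rw [e5, e6] at kk
      zify [hL1, hL2, hF1, hF2] at ih2 kk ⊢
      linarith [ih2, kk]
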